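/- Fix a tuple of strings (S₁,…,Sₙ) and an integer ℓ ≥ 1, and let I_ℓ = { (i,j) : (i,j) is interesting and 2^{ℓ-1} ≤ j - i ≤ 2^ℓ - 1 }. Say a pair (i,j) ∈ I_ℓ is of the first type if i = max{ i' : (i',j) ∈ I_ℓ }, and of the second type otherwise. Then any two distinct pairs of the second type in I_ℓ have different first components. -/

import Mathlib

def lcpLen {α : Type*} [DecidableEq α] : List α → List α → ℕ
  | a :: s, b :: t => if a = b then lcpLen s t + 1 else 0
  | _, _ => 0

/-- A pair `(i,j)` is interesting for the tuple `S` if `i < j` and every index strictly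
between `i` and `j` has a smaller LCP with `Sᵢ` than `Sⱼ` does. -/
def Interesting {α : Type*} [DecidableEq α] (S : ℕ → List α) (i j : ℕ) : Prop :=
  i < j ∧ ∀ l, i < l → l < j → lcpLen (S i) (S l) < lcpLen (S i) (S j)

/-- Membership in the class `I_ℓ`: interesting pairs whose gap lies in the dyadic
range `[2^(ℓ-1), 2^ℓ - 1]`. -/
def InClass {α : Type*} [DecidableEq α] (S : ℕ → List α) (l : ℕ) (i j : ℕ) : Prop :=
  Interesting S i j ∧ 2 ^ (l - 1) ≤ j - i ∧ j - i ≤ 2 ^ l - 1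

/-- A pair of the first type: its first component is maximal among pairs in `I_ℓ`
with the same second component. -/
def FirstType {α : Type*} [DecidableEq α] (S : ℕ → List α) (l : ℕ) (i j : ℕ) : Prop :=
  InClass S l i j ∧ ∀ i', InClass S l i' j → i' ≤ i

def SecondType {α : Type*} [DecidableEq α] (S : ℕ → List α) (l : ℕ) (i j : ℕ) : Prop :=
  InClass S l i j ∧ ¬ FirstType S l i j


lemma lcpLen_comm {α : Type*} [DecidableEq α] : ∀ (s t : List α), lcpLen s t = lcpLen t s
  | [], [] => rfl
  | [], _ :: _ => rfl
  | _ :: _, [] => rfl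
  | a :: s, b :: t => by
    simp only [lcpLen]
    by_cases h : a = b
    · simp [h, lcpLen_comm s t]
    · simp [h, Ne.symm h]

lemma lcpLen_min {α : Type*} [DecidableEq α] :
    ∀ (x y z : List α), min (lcpLen x y) (lcpLen y z) ≤ lcpLen x z
  | [], _, _ => by simp [lcpLen]
  | _ :: _, [], _ => by simp [lcpLen]
  | _ :: _, _ :: _, [] => by
    simp only [lcpLen]
    split <;> simp [lcpLen]
  | a :: s, b :: t, c :: u => by
    simp only [lcpLen]
    by_cases h1 : a = b
    · by_cases h2 : b = c
      · have h3 : a = c := h1.trans h2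
        simp only [h1, h2, h3, if_true]
        have := lcpLen_min s t u
        omega
      · simp [h1, h2]
    · simp [h1]

lemma second_type_key {α : Type*} [DecidableEq α]
    (S : ℕ → List α) (l : ℕ) (hl : 1 ≤ l) (i j j' : ℕ) (hjj : j < j')
    (h1 : SecondType S l i j) (h2 : SecondType S l i j') : False := by
  obtain ⟨hc1, _⟩ := h1
  obtain ⟨hc2, hnf⟩ := h2
  -- extract a witness a with InClass S l a j' and i < a
  have : ∃ a, InClass S l a j' ∧ i < a := by
    by_contra h
    push_neg at h
    exact hnf ⟨hc2, fun i' hi' => h i' hi'⟩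
  obtain ⟨a, hca, hia⟩ := this
  obtain ⟨⟨hij, hint1⟩, hg1, hg1'⟩ := hc1
  obtain ⟨⟨hij', hint2⟩, hg2, hg2'⟩ := hc2
  obtain ⟨⟨haj', hinta⟩, hga, hga'⟩ := hca
  have hpow : 2 ^ l = 2 ^ (l - 1) * 2 := by
    have h : l - 1 + 1 = l := by omega
    conv_lhs => rw [← h]
    exact pow_succ 2 (l - 1)
  have hpos : 0 < 2 ^ (l - 1) := Nat.pow_pos (by norm_num)
  have haj : a < j := by omega
  -- LCP chain
  have f1 : lcpLen (S i) (S a) < lcpLen (S i) (S j) := hint1 a hia haj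
  have f2 : lcpLen (S a) (S j) < lcpLen (S a) (S j') := hinta j haj hjj
  have f3 : lcpLen (S i) (S a) < lcpLen (S i) (S j') := hint2 a hia (haj.trans hjj)
  have B1 := lcpLen_min (S a) (S i) (S j)
  have B4 := lcpLen_min (S i) (S j') (S a)
  have c1 : lcpLen (S a) (S i) = lcpLen (S i) (S a) := lcpLen_comm _ _
  have c2 : lcpLen (S j') (S a) = lcpLen (S a) (S j') := lcpLen_comm _ _
  omega

theorem second_type_distinct_first_components {α : Type*} [DecidableEq α]
    (S : ℕ → List α) (l : ℕ) (hl : 1 ≤ l) (i j j' : ℕ)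
    (h1 : SecondType S l i j) (h2 : SecondType S l i j') :
    j = j' := by
  rcases lt_trichotomy j j' with h | h | h
  · exact absurd (second_type_key S l hl i j j' h h1 h2) not_false
  · exact h
  · exact absurd (second_type_key S l hl i j' j h h2 h1) not_false
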